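/- arXiv:2310.07200 — 2 statements merged into one kernel-verified Lean document; each statement's English description precedes it below -/
import Mathlib

section
/- Let S[n,l] = (1/√M)·∑_{m=0}^{M−1} X[n,m]·e^{j2πml/M} and suppose the received samples for a single path are R[n,l] = β·e^{j2πk(n(M+M_CP)+l)/(NM)}·(1/√M)·∑_{m=0}^{M−1} X[n,m]·e^{j2π(m/M)(l − l_i + (n(M+M_CP)+l)/p)}, where p ≠ 0 and (l − l′ − l_i + (n(M+M_CP)+l)/p)/M is never an integer for l′ ∈ {0,…,M−1}. Then R[n,l] = ∑_{l′=0}^{M−1} h_n[l,l′]·S[n,l′] with h_n[l,l′] = β·e^{j2π((n(M+M_CP)+l)/M)·((k/N) + (M−1)/(2p))}·e^{jπ((M−1)/M)(l−l′−l_i)}·sin(π(l−l′−l_i+(n(M+M_CP)+l)/p)) / (M·sin((π/M)(l−l′−l_i+(n(M+M_CP)+l)/p))). -/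
open Real BigOperators

noncomputable def eI (x : ℝ) : ℂ := Complex.exp ((x : ℂ) * Complex.I)

lemma eI_def (x : ℝ) : Complex.exp ((x : ℂ) * Complex.I) = eI x := rfl

lemma eI_add (x y : ℝ) : eI x * eI y = eI (x + y) := by
  simp [eI, ← Complex.exp_add, Complex.ofReal_add, add_mul]

lemma eI_mul_helper (c : ℂ) (x y z : ℝ) (h : x + y = z) :
    eI x * (c * eI y) = c * eI z := by
  rw [← h, ← eI_add]; ring

lemma eI_mul_helper2 (c : ℂ) (x y z : ℝ) (h : x + y = z) :
    c * eI x * eI y = c * eI z := by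
  rw [← h, ← eI_add]; ring

lemma eI_sub_one (x : ℝ) : eI x - 1 = eI (x/2) * (2 * Real.sin (x/2) * Complex.I) := by
  have h0 : eI x = eI (x/2) * eI (x/2) := by rw [eI_add]; ring_nf
  have h1 : (1:ℂ) = eI (x/2) * eI (-(x/2)) := by rw [eI_add]; simp [eI]
  rw [h0, h1, ← mul_sub]
  congr 1
  rw [eI, eI, Complex.exp_mul_I, Complex.exp_mul_I, Complex.ofReal_neg, Complex.cos_neg,
    Complex.sin_neg, ← Complex.ofReal_sin]
  ring

lemma dirichlet (M : ℕ) (hM : 1 ≤ M) (θ : ℝ) (h : ¬∃ z : ℤ, θ / M = (z:ℝ)) :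
    ∑ m ∈ Finset.range M, eI (2*π*m*θ/M)
      = eI (π*((M:ℝ)-1)*θ/M) * ((Real.sin (π*θ) / Real.sin (π*θ/M) : ℝ) : ℂ) := by
  have hM0 : (M:ℝ) ≠ 0 := Nat.cast_ne_zero.mpr (by omega)
  have hMC : (M:ℂ) ≠ 0 := Nat.cast_ne_zero.mpr (by omega)
  have h2π : (2*π) ≠ 0 := by positivity
  have hsin : Real.sin (π*θ/M) ≠ 0 := by
    intro hs
    rw [Real.sin_eq_zero_iff] at hs
    obtain ⟨z, hz⟩ := hs
    refine h ⟨z, mul_left_cancel₀ Real.pi_ne_zero ?_⟩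
    linear_combination -hz
  set r := eI (2*π*θ/M) with hrdef
  have hterm : ∀ m ∈ Finset.range M, eI (2*π*m*θ/M) = r^m := by
    intro m _
    rw [hrdef, eI, eI, ← Complex.exp_nat_mul]
    congr 1
    push_cast
    ring
  have hr1 : r ≠ 1 := by
    intro hr
    rw [hrdef, eI, Complex.exp_eq_one_iff] at hr
    obtain ⟨z, hz⟩ := hr
    apply h
    refine ⟨z, ?_⟩
    have h2 : ((2*π*θ/M : ℝ) : ℂ) = ((2*π*(z:ℝ) : ℝ) : ℂ) := by
      apply mul_right_cancel₀ Complex.I_ne_zero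
      rw [hz]; push_cast; ring
    have h3 : (2*π*θ/M : ℝ) = 2*π*(z:ℝ) := by exact_mod_cast h2
    exact mul_left_cancel₀ h2π (by linear_combination h3)
  rw [Finset.sum_congr rfl hterm, geom_sum_eq hr1]
  have hrM : r^M = eI (2*π*θ) := by
    rw [hrdef, eI, eI, ← Complex.exp_nat_mul]
    congr 1
    push_cast
    field_simp
  rw [hrM, hrdef, eI_sub_one (2*π*θ), eI_sub_one (2*π*θ/M)]
  have e1 : 2*π*θ/2 = π*θ := by ring
  have e2 : 2*π*θ/M/2 = π*θ/M := by ring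
  rw [e1, e2]
  have hsC : (Real.sin (π*θ/M) : ℂ) ≠ 0 := by exact_mod_cast hsin
  have hne : eI (π*θ/M) ≠ 0 := Complex.exp_ne_zero _
  have hden : eI (π*θ/M) * (2 * (Real.sin (π*θ/M):ℂ) * Complex.I) ≠ 0 :=
    mul_ne_zero hne (mul_ne_zero (mul_ne_zero two_ne_zero hsC) Complex.I_ne_zero)
  rw [div_eq_iff hden, Complex.ofReal_div]
  have key : eI (π*((M:ℝ)-1)*θ/M) * eI (π*θ/M) = eI (π*θ) := by
    rw [eI_add]; congr 1; field_simp; ring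
  calc eI (π*θ) * (2 * (Real.sin (π*θ):ℂ) * Complex.I)
      = (eI (π*((M:ℝ)-1)*θ/M) * eI (π*θ/M)) * (2 * (Real.sin (π*θ):ℂ) * Complex.I) := by
        rw [key]
    _ = (eI (π*((M:ℝ)-1)*θ/M) * eI (π*θ/M)) * (2 * (Real.sin (π*θ):ℂ) * Complex.I) *
          (((Real.sin (π*θ/M):ℂ))⁻¹ * (Real.sin (π*θ/M):ℂ)) := by
        rw [inv_mul_cancel₀ hsC, mul_one]
    _ = eI (π*((M:ℝ)-1)*θ/M) * ((Real.sin (π*θ):ℂ) / (Real.sin (π*θ/M):ℂ)) *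
          (eI (π*θ/M) * (2 * (Real.sin (π*θ/M):ℂ) * Complex.I)) := by
        rw [div_eq_mul_inv]
        ring

lemma orth (M : ℕ) (hM : 1 ≤ M) (m m' : ℕ) (hm : m < M) (hm' : m' < M) :
    ∑ l' ∈ Finset.range M, eI (2*π*((m:ℝ)-(m':ℝ))*(l':ℝ)/M) = if m = m' then (M:ℂ) else 0 := by
  have hM0 : (M:ℝ) ≠ 0 := Nat.cast_ne_zero.mpr (by omega)
  have hMC : (M:ℂ) ≠ 0 := Nat.cast_ne_zero.mpr (by omega)
  have h2π : (2*π) ≠ 0 := by positivity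
  by_cases hmm : m = m'
  · subst hmm
    simp [eI]
  · rw [if_neg hmm]
    set r := eI (2*π*((m:ℝ)-(m':ℝ))/M) with hrdef
    have hterm : ∀ l' ∈ Finset.range M, eI (2*π*((m:ℝ)-(m':ℝ))*(l':ℝ)/M) = r^l' := by
      intro l' _
      rw [hrdef, eI, eI, ← Complex.exp_nat_mul]
      congr 1
      push_cast
      ring
    have hr1 : r ≠ 1 := by
      intro hr
      rw [hrdef, eI, Complex.exp_eq_one_iff] at hr
      obtain ⟨z, hz⟩ := hr
      have h2 : ((2*π*((m:ℝ)-(m':ℝ))/M : ℝ) : ℂ) = ((2*π*(z:ℝ) : ℝ) : ℂ) := by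
        apply mul_right_cancel₀ Complex.I_ne_zero
        rw [hz]; push_cast; ring
      have h3 : (2*π*((m:ℝ)-(m':ℝ))/M : ℝ) = 2*π*(z:ℝ) := by exact_mod_cast h2
      have h4' : ((m:ℝ)-(m':ℝ))/M = (z:ℝ) := mul_left_cancel₀ h2π (by linear_combination h3)
      rw [div_eq_iff hM0] at h4'
      have h5 : (m:ℤ) - (m':ℤ) = z * (M:ℤ) := by exact_mod_cast h4'
      have hz0 : z ≠ 0 := by
        intro hz0; rw [hz0] at h5; simp at h5; omega
      rcases lt_or_gt_of_ne hz0 with hneg | hpos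
      · have hz1 : z ≤ -1 := by omega
        have hb1 : z * (M:ℤ) ≤ -1 * (M:ℤ) :=
          mul_le_mul_of_nonneg_right hz1 (by positivity)
        omega
      · have hz1 : 1 ≤ z := hpos
        have hb1 : 1 * (M:ℤ) ≤ z * (M:ℤ) :=
          mul_le_mul_of_nonneg_right hz1 (by positivity)
        omega
    have hrM : r^M = 1 := by
      rw [hrdef, eI, ← Complex.exp_nat_mul]
      have harg : (M:ℂ) * (((2*π*((m:ℝ)-(m':ℝ))/M : ℝ):ℂ) * Complex.I)
          = (((m:ℤ) - (m':ℤ) : ℤ) : ℂ) * (2*(π:ℂ)*Complex.I) := by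
        push_cast
        field_simp
      rw [harg, Complex.exp_int_mul_two_pi_mul_I]
    rw [Finset.sum_congr rfl hterm, geom_sum_eq hr1, hrM]
    simp

lemma collapse (M : ℕ) (hM : 1 ≤ M) (a : ℝ) (X : ℕ → ℂ) :
    ∑ l' ∈ Finset.range M, (∑ m' ∈ Finset.range M, eI (2*π*(m':ℝ)*(a - (l':ℝ))/M)) *
        (∑ m ∈ Finset.range M, X m * eI (2*π*(m:ℝ)*(l':ℝ)/M))
    = (M:ℂ) * ∑ m ∈ Finset.range M, X m * eI (2*π*(m:ℝ)*a/M) := by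
  have step1 : ∀ l' ∈ Finset.range M,
      (∑ m' ∈ Finset.range M, eI (2*π*(m':ℝ)*(a - (l':ℝ))/M)) *
        (∑ m ∈ Finset.range M, X m * eI (2*π*(m:ℝ)*(l':ℝ)/M))
      = ∑ m ∈ Finset.range M, ∑ m' ∈ Finset.range M,
          X m * eI (2*π*(m':ℝ)*a/M) * eI (2*π*((m:ℝ)-(m':ℝ))*(l':ℝ)/M) := by
    intro l' _
    rw [Finset.sum_mul_sum, Finset.sum_comm]
    refine Finset.sum_congr rfl fun m _ => Finset.sum_congr rfl fun m' _ => ?_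
    rw [eI_mul_helper (X m) _ _ _ rfl, eI_mul_helper2 (X m) _ _ _ rfl]
    congr 2
    ring
  have step2 : ∀ m ∈ Finset.range M, ∀ m' ∈ Finset.range M,
      ∑ l' ∈ Finset.range M, X m * eI (2*π*(m':ℝ)*a/M) * eI (2*π*((m:ℝ)-(m':ℝ))*(l':ℝ)/M)
      = X m * eI (2*π*(m':ℝ)*a/M) * (if m = m' then (M:ℂ) else 0) := by
    intro m hm m' hm'
    rw [← Finset.mul_sum, orth M hM m m' (Finset.mem_range.mp hm) (Finset.mem_range.mp hm')]
  rw [Finset.sum_congr rfl step1, Finset.sum_comm, Finset.mul_sum]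
  refine Finset.sum_congr rfl fun m hm => ?_
  rw [Finset.sum_comm, Finset.sum_congr rfl (step2 m hm)]
  simp only [mul_ite, mul_zero]
  rw [Finset.sum_ite_eq (Finset.range M) m, if_pos hm]
  ring


/-- Core computational identity of Theorem 1: the input-output relation of
CP-OFDM-based OTFS with Doppler squint, for a single path. -/
theorem otfs_input_output_relation (M N M_CP l_i n l : ℕ) (hM : 1 ≤ M) (hN : 1 ≤ N)
    (β : ℂ) (k p : ℝ) (hp : p ≠ 0)
    (X S : ℕ → ℂ) (R : ℂ)
    (hS : ∀ l₀, S l₀ = ((1 / Real.sqrt M : ℝ) : ℂ) *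
      ∑ m ∈ Finset.range M, X m *
        Complex.exp (((2 * π * (m : ℝ) * (l₀ : ℝ) / M : ℝ) : ℂ) * Complex.I))
    (hnonint : ∀ l' < M, ¬ ∃ z : ℤ,
      (((l : ℝ) - l' - l_i + ((n : ℝ) * ((M : ℝ) + M_CP) + l) / p) / M) = (z : ℝ))
    (hR : R = β *
      Complex.exp (((2 * π * k * ((n : ℝ) * ((M : ℝ) + M_CP) + l) / (N * M) : ℝ) : ℂ) * Complex.I) *
      ((1 / Real.sqrt M : ℝ) : ℂ) *
      ∑ m ∈ Finset.range M, X m *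
        Complex.exp (((2 * π * ((m : ℝ) / M) *
          ((l : ℝ) - l_i + ((n : ℝ) * ((M : ℝ) + M_CP) + l) / p) : ℝ) : ℂ) * Complex.I)) :
    R = ∑ l' ∈ Finset.range M,
      (β *
        Complex.exp (((2 * π * (((n : ℝ) * ((M : ℝ) + M_CP) + l) / M) *
          (k / N + ((M : ℝ) - 1) / (2 * p)) : ℝ) : ℂ) * Complex.I) *
        Complex.exp (((π * (((M : ℝ) - 1) / M) * ((l : ℝ) - l' - l_i) : ℝ) : ℂ) * Complex.I) *
        ((Real.sin (π * ((l : ℝ) - l' - l_i + ((n : ℝ) * ((M : ℝ) + M_CP) + l) / p)) /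
          (M * Real.sin (π / M * ((l : ℝ) - l' - l_i + ((n : ℝ) * ((M : ℝ) + M_CP) + l) / p))) : ℝ) : ℂ))
      * S l' := by
  have hMne : M ≠ 0 := by omega
  have hM0 : (M:ℝ) ≠ 0 := Nat.cast_ne_zero.mpr hMne
  have hMC : (M:ℂ) ≠ 0 := Nat.cast_ne_zero.mpr hMne
  have hN0 : (N:ℝ) ≠ 0 := Nat.cast_ne_zero.mpr (by omega)
  rw [hR]
  simp only [hS, eI_def]
  set TT : ℝ := (n:ℝ)*((M:ℝ)+(M_CP:ℝ))+(l:ℝ) with hTT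
  set a : ℝ := (l:ℝ) - (l_i:ℝ) + TT/p with ha
  set C : ℝ := 2*π*k*TT/((N:ℝ)*(M:ℝ)) with hC
  set A : ℝ := 2*π*(TT/(M:ℝ))*(k/(N:ℝ) + ((M:ℝ)-1)/(2*p)) with hA
  set sq : ℂ := ((1 / Real.sqrt (M:ℝ) : ℝ) : ℂ) with hsq
  have key : ∀ l' ∈ Finset.range M,
      (β * eI A * eI (π*(((M:ℝ)-1)/(M:ℝ))*((l:ℝ)-(l':ℝ)-(l_i:ℝ))) *
        ((Real.sin (π*((l:ℝ)-(l':ℝ)-(l_i:ℝ)+TT/p)) /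
          ((M:ℝ) * Real.sin (π/(M:ℝ)*((l:ℝ)-(l':ℝ)-(l_i:ℝ)+TT/p))) : ℝ) : ℂ)) *
        (sq * ∑ m ∈ Finset.range M, X m * eI (2*π*(m:ℝ)*(l':ℝ)/(M:ℝ)))
      = β * eI C * sq * (((M:ℝ):ℂ))⁻¹ *
          ((∑ m' ∈ Finset.range M, eI (2*π*(m':ℝ)*(a - (l':ℝ))/(M:ℝ))) *
           (∑ m ∈ Finset.range M, X m * eI (2*π*(m:ℝ)*(l':ℝ)/(M:ℝ)))) := by
    intro l' hl'
    have hθ := hnonint l' (Finset.mem_range.mp hl')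
    have hd := dirichlet M hM ((l:ℝ)-(l':ℝ)-(l_i:ℝ)+TT/p) hθ
    have hsum : (∑ m' ∈ Finset.range M, eI (2*π*(m':ℝ)*(a - (l':ℝ))/(M:ℝ)))
        = ∑ m' ∈ Finset.range M, eI (2*π*(m':ℝ)*((l:ℝ)-(l':ℝ)-(l_i:ℝ)+TT/p)/(M:ℝ)) :=
      Finset.sum_congr rfl fun m' _ => by rw [ha]; congr 1; ring
    rw [hsum, hd]
    have harg : π/(M:ℝ)*((l:ℝ)-(l':ℝ)-(l_i:ℝ)+TT/p) = π*((l:ℝ)-(l':ℝ)-(l_i:ℝ)+TT/p)/(M:ℝ) := by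
      ring
    rw [harg, Complex.ofReal_div, Complex.ofReal_div, Complex.ofReal_mul]
    have hAB : eI A * eI (π*(((M:ℝ)-1)/(M:ℝ))*((l:ℝ)-(l':ℝ)-(l_i:ℝ)))
        = eI C * eI (π*((M:ℝ)-1)*((l:ℝ)-(l':ℝ)-(l_i:ℝ)+TT/p)/(M:ℝ)) := by
      rw [eI_add, eI_add]
      congr 1
      rw [hA, hC]
      field_simp
      ring
    have hcast : (((M:ℝ)):ℂ) = (M:ℂ) := by push_cast; ring
    linear_combination hAB * (β * sq *
      ((Real.sin (π*((l:ℝ)-(l':ℝ)-(l_i:ℝ)+TT/p)):ℂ) /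
        ((((M:ℝ)):ℂ) * (Real.sin (π*((l:ℝ)-(l':ℝ)-(l_i:ℝ)+TT/p)/(M:ℝ)):ℂ))) *
      (∑ m ∈ Finset.range M, X m * eI (2*π*(m:ℝ)*(l':ℝ)/(M:ℝ))))
  rw [Finset.sum_congr rfl key, ← Finset.mul_sum, collapse M hM a X]
  have hXsum : (∑ m ∈ Finset.range M, X m * eI (2*π*((m:ℝ)/(M:ℝ))*a))
      = ∑ m ∈ Finset.range M, X m * eI (2*π*(m:ℝ)*a/(M:ℝ)) :=
    Finset.sum_congr rfl fun m _ => by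
      rw [show 2*π*((m:ℝ)/(M:ℝ))*a = 2*π*(m:ℝ)*a/(M:ℝ) from by ring]
  rw [hXsum]
  rw [show (((M:ℝ)):ℂ)⁻¹ = ((M:ℂ))⁻¹ from by push_cast; ring]
  field_simp
  congr 1
  exact Finset.sum_congr rfl fun x _ => by congr 2; ring
end

section
/- Let M ≥ 1 and suppose for each l′ ∈ {0,…,M−1} the channel coefficient is h[l,l′] = β·φ(l)·[(l′+l_i) mod M = l] with |β| > 0, φ unimodular, and 1 ≤ l_i ≤ l_max < M. If S[l′] = x_p for l′ ∈ {q(l_max+1) : 0 ≤ q ≤ M_p−1} and 0 otherwise, then for every l' ∈ {1,…,l_max} with l' ≠ l_i and every q with q(l_max+1)+l' ≤ M−1 − l_max, the received sample R[q(l_max+1)+l'] = ∑_{l′} h[q(l_max+1)+l', l′]·S[l′] = 0, while |R[q(l_max+1)+l_i]| = |β|·|x_p| whenever q(l_max+1)+l_i ≤ M−1. -/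
open BigOperators

/-- Correctness of threshold-based delay detection in the noiseless, no-squint,
single-path case. -/
theorem delay_detection_correct (M l_max l_i M_p : ℕ) (x_p β : ℂ) (φ : ℕ → ℂ)
    (S : ℕ → ℂ) (h : ℕ → ℕ → ℂ) (R : ℕ → ℂ)
    (hM : 1 ≤ M) (hli : 1 ≤ l_i) (hlim : l_i ≤ l_max) (hlmax : l_max < M)
    (hMp : M_p = M / (l_max + 1))
    (hβ : 0 < ‖β‖)
    (hφ : ∀ l, ‖φ l‖ = 1)
    (hS : ∀ l', S l' = if ∃ q, q < M_p ∧ l' = q * (l_max + 1) then x_p else 0)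
    (hh : ∀ l l', h l l' = if (l' + l_i) % M = l then β * φ l else 0)
    (hR : ∀ l, R l = ∑ l' ∈ Finset.range M, h l l' * S l') :
    (∀ l' q, 1 ≤ l' → l' ≤ l_max → l' ≠ l_i →
      q * (l_max + 1) + l' ≤ M - 1 - l_max → R (q * (l_max + 1) + l') = 0) ∧
    (∀ q, q ≤ M_p - 1 → q * (l_max + 1) + l_i ≤ M - 1 →
      ‖R (q * (l_max + 1) + l_i)‖ = ‖β‖ * ‖x_p‖) := by
  have key : ∀ q', q' < M_p → q' * (l_max + 1) + (l_max + 1) ≤ M := by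
    intro q' hq'
    have h1 : q' + 1 ≤ M / (l_max + 1) := by omega
    have h2 := (Nat.le_div_iff_mul_le (Nat.succ_pos l_max)).mp h1
    rw [add_mul, one_mul] at h2
    exact h2
  have modlem : ∀ a c, c ≤ l_max → (a * (l_max + 1) + c) % (l_max + 1) = c := by
    intro a c hc
    rw [add_comm, Nat.add_mul_mod_self_right, Nat.mod_eq_of_lt (by omega)]
  have hMp1 : 1 ≤ M_p := by
    rw [hMp]
    exact (Nat.one_le_div_iff (Nat.succ_pos l_max)).mpr (by omega)
  constructor
  · intro l' q h1 h2 h3 h4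
    rw [hR]
    apply Finset.sum_eq_zero
    intro b hb
    rw [hh, hS]
    by_cases hex : ∃ q₀, q₀ < M_p ∧ b = q₀ * (l_max + 1)
    · obtain ⟨q', hq', rfl⟩ := hex
      by_cases hmod : (q' * (l_max + 1) + l_i) % M = q * (l_max + 1) + l'
      · exfalso
        have hk := key q' hq'
        have hlt : q' * (l_max + 1) + l_i < M := by linarith
        rw [Nat.mod_eq_of_lt hlt] at hmod
        have e1 := modlem q' l_i hlim
        have e2 := modlem q l' h2
        rw [hmod, e2] at e1
        exact h3 e1
      · rw [if_neg hmod, zero_mul]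
    · rw [if_neg hex, mul_zero]
  · intro q hq hle
    have hqlt : q < M_p := by omega
    have hk := key q hqlt
    rw [hR, Finset.sum_eq_single_of_mem (q * (l_max + 1))
      (Finset.mem_range.mpr (by linarith))]
    · rw [hh, hS, if_pos (Nat.mod_eq_of_lt (by omega)),
        if_pos ⟨q, hqlt, rfl⟩, norm_mul, norm_mul, hφ, mul_one]
    · intro b hb hne
      rw [hh, hS]
      by_cases hex : ∃ q₀, q₀ < M_p ∧ b = q₀ * (l_max + 1)
      · obtain ⟨q', hq', rfl⟩ := hex
        by_cases hmod : (q' * (l_max + 1) + l_i) % M = q * (l_max + 1) + l_i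
        · exfalso
          have hk' := key q' hq'
          have hlt : q' * (l_max + 1) + l_i < M := by linarith
          rw [Nat.mod_eq_of_lt hlt] at hmod
          exact hne (by omega)
        · rw [if_neg hmod, zero_mul]
      · rw [if_neg hex, mul_zero]
end
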